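/- Let u = (u_1,...,u_N) be uniformly distributed on the unit sphere of R^N, and let s_1,...,s_N be nonnegative real numbers (independent of u) with s_k ≤ B almost surely for all k. Let s̄ = N^{-1}∑_k s_k. Then for every t > 0, Pr{∑_{k=1}^N s_k u_k² ≥ s̄ + t} ≤ exp(-N t² / (4B(B+t))). -/

import Mathlib

open MeasureTheory

open Real Set Metric
open scoped ENNReal

-- scalar lemma 1: log z ≤ (z - z⁻¹)/2 for z ≥ 1
lemma log_le_half_sub_inv {z : ℝ} (hz : 1 ≤ z) : Real.log z ≤ (z - z⁻¹) / 2 := by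
  have h0 : (0:ℝ) < 1 := one_pos
  have key : ∀ w ∈ Set.Ici (1:ℝ), HasDerivAt (fun w : ℝ => (w - w⁻¹)/2 - Real.log w)
      ((1 + (w^2)⁻¹)/2 - w⁻¹) w := by
    intro w hw
    have hw0 : w ≠ 0 := by simp at hw; nlinarith
    have h1 : HasDerivAt (fun w : ℝ => (w - w⁻¹)/2) ((1 + (w^2)⁻¹)/2) w := by
      have := ((hasDerivAt_id w).sub (hasDerivAt_inv hw0)).div_const 2
      simpa [sub_neg_eq_add, pow_two] using this
    exact h1.sub (Real.hasDerivAt_log hw0)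
  have mono : MonotoneOn (fun w : ℝ => (w - w⁻¹)/2 - Real.log w) (Set.Ici 1) := by
    apply monotoneOn_of_deriv_nonneg (convex_Ici 1)
    · exact ContinuousOn.sub ((continuousOn_id.sub (continuousOn_inv₀.mono (by intro x hx; simp at hx ⊢; nlinarith))).div_const 2)
        (Real.continuousOn_log.mono (by intro x hx; simp at hx ⊢; nlinarith))
    · intro w hw
      rw [interior_Ici] at hw
      exact ((key w (Set.mem_Ici.2 (le_of_lt (Set.mem_Ioi.1 hw)))).differentiableAt).differentiableWithinAt
    · intro w hw
      rw [interior_Ici] at hw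
      rw [(key w (Set.mem_Ici.2 (Set.mem_Ioi.1 hw).le)).deriv]
      have hw0 : 0 < w := lt_trans one_pos (Set.mem_Ioi.1 hw)
      rw [div_sub' (two_ne_zero)]
      apply div_nonneg _ (by norm_num)
      have : (1 + (w^2)⁻¹) - w⁻¹ * 2 = (1 - w⁻¹)^2 := by field_simp; ring
      nlinarith [sq_nonneg (1 - w⁻¹)]
  have := mono (Set.self_mem_Ici) hz hz
  simp at this
  linarith

-- scalar lemma 2: y - y²/2 ≤ log(1+y) for y ≥ 0
lemma sub_sq_div_two_le_log {y : ℝ} (hy : 0 ≤ y) : y - y^2/2 ≤ Real.log (1+y) := by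
  have key : ∀ w ∈ Set.Ici (0:ℝ), HasDerivAt (fun w : ℝ => Real.log (1+w) - w + w^2/2)
      ((1+w)⁻¹ - 1 + w) w := by
    intro w hw
    simp at hw
    have h1w : (1:ℝ) + w ≠ 0 := by nlinarith
    have h1 : HasDerivAt (fun w : ℝ => Real.log (1+w)) ((1+w)⁻¹) w := by
      have := (Real.hasDerivAt_log h1w).comp w ((hasDerivAt_id w).const_add 1)
      simpa [Function.comp_def] using this
    have h2 : HasDerivAt (fun w : ℝ => w^2/2) w w := by
      simpa using (hasDerivAt_pow 2 w).div_const 2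
    exact (h1.sub (hasDerivAt_id w)).add h2
  have mono : MonotoneOn (fun w : ℝ => Real.log (1+w) - w + w^2/2) (Set.Ici 0) := by
    apply monotoneOn_of_deriv_nonneg (convex_Ici 0)
    · apply ContinuousOn.add (ContinuousOn.sub _ continuousOn_id) (by fun_prop)
      apply ContinuousOn.log (by fun_prop)
      intro x hx; simp at hx; nlinarith
    · intro w hw
      rw [interior_Ici] at hw
      exact ((key w (Set.mem_Ici.2 (Set.mem_Ioi.1 hw).le)).differentiableAt).differentiableWithinAt
    · intro w hw
      rw [interior_Ici] at hw
      rw [(key w (Set.mem_Ici.2 (Set.mem_Ioi.1 hw).le)).deriv]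
      have hw0 : (0:ℝ) < w := hw
      have hpos : (0:ℝ) < 1 + w := by linarith
      have hinv : (1+w)⁻¹ * (1+w) = 1 := inv_mul_cancel₀ (ne_of_gt hpos)
      nlinarith [sq_nonneg w, inv_pos.2 hpos]
  have := mono (Set.self_mem_Ici) hy hy
  simp at this
  linarith

-- combined pointwise bound
lemma exp_le_one_sub {x b : ℝ} (hb0 : 0 ≤ b) (hb1 : b < 1) (hx : |x| ≤ b) :
    Real.exp (-x - x^2/(2*(1-b))) ≤ 1 - x := by
  have hbx : x ≤ b := le_trans (le_abs_self x) hx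
  have hx1 : x < 1 := lt_of_le_of_lt hbx hb1
  have h1x : 0 < 1 - x := by linarith
  have h1b : 0 < 1 - b := by linarith
  rw [← Real.exp_log h1x]
  apply Real.exp_le_exp.2
  rcases le_or_gt 0 x with hx0 | hx0
  · have hz : 1 ≤ (1-x)⁻¹ := by
      nlinarith [mul_inv_cancel₀ (ne_of_gt h1x), inv_pos.2 h1x]
    have h := log_le_half_sub_inv hz
    rw [Real.log_inv, inv_inv] at h
    have key : ((1-x) - (1-x)⁻¹)/2 = -x - x^2/(2*(1-x)) := by
      field_simp
      ring
    have hle : x^2/(2*(1-x)) ≤ x^2/(2*(1-b)) := by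
      apply div_le_div_of_nonneg_left (sq_nonneg x) (by linarith) (by linarith)
    linarith
  · have h := sub_sq_div_two_le_log (neg_nonneg.2 hx0.le)
    have h2 : 1 + -x = 1 - x := by ring
    rw [h2] at h
    rw [neg_sq] at h
    have hle : x^2/2 ≤ x^2/(2*(1-b)) := by
      apply div_le_div_of_nonneg_left (sq_nonneg x) (by linarith) (by linarith)
    linarith

lemma polar_lintegral (N : ℕ) (g : ℝ → ℝ≥0∞) (hg : Measurable g)
    (S : Set (sphere (0 : EuclideanSpace ℝ (Fin N)) 1)) (hS : MeasurableSet S) :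
    ∫⁻ x in Subtype.val ''
        ((homeomorphUnitSphereProd (EuclideanSpace ℝ (Fin N))) ⁻¹' (S ×ˢ Set.univ)),
        g ‖x‖ ∂(volume : Measure (EuclideanSpace ℝ (Fin N)))
      = (volume : Measure (EuclideanSpace ℝ (Fin N))).toSphere S
        * ∫⁻ r : Set.Ioi (0:ℝ), g r ∂(MeasureTheory.Measure.volumeIoiPow (N - 1)) := by
  set E := EuclideanSpace ℝ (Fin N)
  set h := homeomorphUnitSphereProd E
  rw [← setLIntegral_subtype ((measurableSet_singleton (0:E)).compl) _ (fun x => g ‖x‖)]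
  have hcong : ∀ y : ({0}ᶜ : Set E), g ‖(y : E)‖ = (fun p : sphere (0:E) 1 × Set.Ioi (0:ℝ) => g p.2) (h y) := by
    intro y; simp [h]
  rw [lintegral_congr_ae (Filter.Eventually.of_forall (fun y => hcong y))] -- maybe setLIntegral_congr_fun
  rw [← setLIntegral_map (s := S ×ˢ Set.univ)
    (f := fun p : sphere (0:E) 1 × Set.Ioi (0:ℝ) => g p.2)
    (g := h) (hS.prod MeasurableSet.univ)
    (hg.comp (measurable_subtype_coe.comp measurable_snd)) h.measurable]
  rw [(MeasureTheory.Measure.measurePreserving_homeomorphUnitSphereProd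
    (volume : Measure E)).map_eq]
  have hdim : Module.finrank ℝ E - 1 = N - 1 := by rw [finrank_euclideanSpace_fin]
  rw [hdim]
  rw [← Measure.prod_restrict, Measure.restrict_univ]
  have := lintegral_prod_mul (μ := (volume : Measure E).toSphere.restrict S)
    (ν := (MeasureTheory.Measure.volumeIoiPow (N-1)))
    (f := fun _ : sphere (0:E) 1 => (1 : ℝ≥0∞))
    (g := fun r : Set.Ioi (0:ℝ) => g r) aemeasurable_const
    ((hg.comp measurable_subtype_coe).aemeasurable)
  simp only [one_mul] at this
  rw [this, lintegral_one, Measure.restrict_apply_univ]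

lemma euclid_prod_lintegral (N : ℕ) (q : Fin N → ℝ → ℝ) (hqi : ∀ k, Integrable (q k))
    (hq0 : ∀ k x, 0 ≤ q k x) :
    ∫⁻ x : EuclideanSpace ℝ (Fin N), ENNReal.ofReal (∏ k, q k (x k)) ∂volume
      = ENNReal.ofReal (∏ k, ∫ x, q k x) := by
  have hmp := EuclideanSpace.volume_preserving_symm_measurableEquiv_toLp (Fin N)
  have step1 : ∫⁻ x : EuclideanSpace ℝ (Fin N), ENNReal.ofReal (∏ k, q k (x k)) ∂volume
      = ∫⁻ y : (Fin N → ℝ), ENNReal.ofReal (∏ k, q k (y k)) ∂volume := by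
    rw [← hmp.map_eq, lintegral_map_equiv]
    rfl
  rw [step1]
  have hfi : Integrable (fun y : Fin N → ℝ => ∏ k, q k (y k)) :=
    Integrable.fintype_prod (𝕜 := ℝ) hqi
  rw [← ofReal_integral_eq_lintegral_ofReal hfi
    (Filter.Eventually.of_forall (fun y => Finset.prod_nonneg (fun k _ => hq0 k (y k))))]
  rw [MeasureTheory.volume_pi, MeasureTheory.integral_fintype_prod_eq_prod]

lemma one_dim_gauss {b : ℝ} (hb : 0 < b) :
    ∫ x : ℝ, (Real.sqrt (2*π))⁻¹ * Real.exp (-b * x^2) = (Real.sqrt (2*b))⁻¹ := by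
  rw [integral_const_mul, integral_gaussian]
  have hπ : 0 < π := Real.pi_pos
  rw [Real.sqrt_div hπ.le, Real.sqrt_mul (by norm_num : (0:ℝ) ≤ 2) π,
    Real.sqrt_mul (by norm_num : (0:ℝ) ≤ 2) b]
  have h1 : Real.sqrt π ≠ 0 := ne_of_gt (Real.sqrt_pos.2 hπ)
  have h2 : Real.sqrt 2 ≠ 0 := ne_of_gt (Real.sqrt_pos.2 (by norm_num))
  have h3 : Real.sqrt b ≠ 0 := ne_of_gt (Real.sqrt_pos.2 hb)
  field_simp

lemma sqrt_inv_le_exp {x b : ℝ} (hb0 : 0 ≤ b) (hb1 : b < 1) (hx : |x| ≤ b) :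
    (Real.sqrt (1 - x))⁻¹ ≤ Real.exp (x/2 + x^2/(4*(1-b))) := by
  have h := exp_le_one_sub hb0 hb1 hx
  have h2 := Real.sqrt_le_sqrt h
  rw [← Real.exp_half] at h2
  have h3 := inv_anti₀ (Real.exp_pos _) h2
  rw [← Real.exp_neg] at h3
  refine le_trans h3 (le_of_eq ?_)
  congr 1
  have : (1:ℝ) - b ≠ 0 := by linarith
  field_simp
  ring


/-- The uniform (normalized Haar) probability measure on the unit sphere of `ℝ^N`. -/
noncomputable def sphereUniform (N : ℕ) :
    Measure (Metric.sphere (0 : EuclideanSpace ℝ (Fin N)) 1) :=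
  ((volume : Measure (EuclideanSpace ℝ (Fin N))).toSphere Set.univ)⁻¹ •
    (volume : Measure (EuclideanSpace ℝ (Fin N))).toSphere

/-- For `u` uniform on the unit sphere of `ℝ^N` and `0 ≤ s_k ≤ B`,
with `s̄ = N⁻¹ ∑ s_k`, for every `t > 0`,
`Pr{∑ s_k u_k² ≥ s̄ + t} ≤ exp (-N t² / (4 B (B + t)))`. -/
theorem sphere_quadratic_upper_deviation (N : ℕ) (hN : 0 < N) (s : Fin N → ℝ) (B t : ℝ)
    (hs : ∀ k, 0 ≤ s k) (hsB : ∀ k, s k ≤ B) (ht : 0 < t) :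
    sphereUniform N
        {u | (1 / N : ℝ) * ∑ k, s k + t ≤
          ∑ k, s k * ((u : EuclideanSpace ℝ (Fin N)) k) ^ 2}
      ≤ ENNReal.ofReal (Real.exp (-(N * t ^ 2) / (4 * B * (B + t)))) := by
  classical
  set c₀ : ℝ := (1 / N : ℝ) * ∑ k, s k + t with hc₀def
  have hsum0 : 0 ≤ (1 / N : ℝ) * ∑ k, s k := by
    apply mul_nonneg (by positivity)
    exact Finset.sum_nonneg fun k _ => hs k
  have hc₀pos : 0 < c₀ := by rw [hc₀def]; linarith
  -- the squared-coordinates sum to one on the sphere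
  have hnorm_sq : ∀ u : Metric.sphere (0 : EuclideanSpace ℝ (Fin N)) 1,
      ∑ k, ((u : EuclideanSpace ℝ (Fin N)) k)^2 = 1 := by
    intro u
    have hu : ‖(u : EuclideanSpace ℝ (Fin N))‖ = 1 := by
      have := u.2; simpa [mem_sphere_iff_norm] using this
    rw [EuclideanSpace.norm_eq] at hu
    have := Real.sqrt_eq_one.1 hu
    simpa using this
  by_cases hBc : B < c₀
  · -- event is empty
    have hempty : {u : Metric.sphere (0 : EuclideanSpace ℝ (Fin N)) 1 |
        c₀ ≤ ∑ k, s k * ((u : EuclideanSpace ℝ (Fin N)) k) ^ 2} = ∅ := by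
      ext u
      simp only [Set.mem_setOf_eq, Set.mem_empty_iff_false, iff_false, not_le]
      calc ∑ k, s k * ((u : EuclideanSpace ℝ (Fin N)) k) ^ 2
          ≤ ∑ k, B * ((u : EuclideanSpace ℝ (Fin N)) k) ^ 2 :=
            Finset.sum_le_sum fun k _ => mul_le_mul_of_nonneg_right (hsB k) (sq_nonneg _)
        _ = B := by rw [← Finset.mul_sum, hnorm_sq u, mul_one]
        _ < c₀ := hBc
    rw [show {u : Metric.sphere (0 : EuclideanSpace ℝ (Fin N)) 1 |
        (1 / N : ℝ) * ∑ k, s k + t ≤ ∑ k, s k * ((u : EuclideanSpace ℝ (Fin N)) k) ^ 2} =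
        (∅ : Set (Metric.sphere (0 : EuclideanSpace ℝ (Fin N)) 1)) from hempty]
    simp
  · push_neg at hBc  -- c₀ ≤ B
    have hB0 : 0 < B := lt_of_lt_of_le hc₀pos hBc
    have hBt : 0 < B + t := by linarith
    have hNR : (0:ℝ) < N := Nat.cast_pos.2 hN
    set lam : ℝ := t / (2*B*(B+t)) with hlamdef
    have hlam0 : 0 < lam := by positivity
    set b : ℝ := t / (B+t) with hbdef
    have hb0 : 0 < b := by positivity
    have hb1 : b < 1 := by rw [hbdef, div_lt_one hBt]; linarith
    have h2lamB : 2*lam*B = b := by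
      rw [hlamdef, hbdef]; field_simp
    set a : Fin N → ℝ := fun k => s k - c₀ with hadef
    have haB : ∀ k, |a k| ≤ B := by
      intro k
      rw [abs_le]
      constructor
      · simp only [hadef]; linarith [hs k, hBc]
      · simp only [hadef]; linarith [hsB k, hc₀pos]
    have hxb : ∀ k, |2*lam*(a k)| ≤ b := by
      intro k
      calc |2*lam*(a k)| = 2*lam * |a k| := by
            rw [abs_mul, abs_of_pos (by positivity : (0:ℝ) < 2*lam)]
        _ ≤ 2*lam*B := by
            apply mul_le_mul_of_nonneg_left (haB k) (by positivity)
        _ = b := h2lamB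
    have hbqpos : ∀ k, 0 < 1/2 - lam * a k := by
      intro k
      have h1 : lam * a k ≤ lam * B :=
        mul_le_mul_of_nonneg_left (le_trans (le_abs_self _) (haB k)) hlam0.le
      have h2 : lam * B = t / (2*(B+t)) := by rw [hlamdef]; field_simp
      have h3 : t / (2*(B+t)) < 1/2 := by
        rw [div_lt_iff₀ (by positivity)]; linarith
      have h4 : lam * a k < 1/2 := lt_of_le_of_lt (h1.trans (le_of_eq h2)) h3
      linarith [h4]
    set S : Set (Metric.sphere (0 : EuclideanSpace ℝ (Fin N)) 1) :=
      {u | c₀ ≤ ∑ k, s k * ((u : EuclideanSpace ℝ (Fin N)) k) ^ 2} with hSdef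
    have hSmeas : MeasurableSet S := by
      apply measurableSet_le measurable_const
      apply Finset.measurable_sum
      intro k _
      exact ((((measurable_pi_apply k).comp (WithLp.measurable_ofLp 2 (Fin N → ℝ))).comp measurable_subtype_coe).pow_const 2).const_mul _
    -- the one-dimensional factors
    set q : Fin N → ℝ → ℝ :=
      fun k x => (Real.sqrt (2*π))⁻¹ * Real.exp (-(1/2 - lam * a k) * x^2) with hqdef
    have hqint : ∀ k, Integrable (q k) :=
      fun k => (integrable_exp_neg_mul_sq (hbqpos k)).const_mul _
    have hq0 : ∀ k x, 0 ≤ q k x := by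
      intro k x
      apply mul_nonneg (inv_nonneg.2 (Real.sqrt_nonneg _)) (Real.exp_pos _).le
    -- the gaussian density
    set D : EuclideanSpace ℝ (Fin N) → ℝ≥0∞ :=
      fun x => ENNReal.ofReal (((Real.sqrt (2*π))⁻¹)^N * Real.exp (-‖x‖^2/2)) with hDdef
    have hDmeas : Measurable D := by
      apply ENNReal.measurable_ofReal.comp
      exact (Real.measurable_exp.comp ((measurable_norm.pow_const 2).neg.div_const 2)).const_mul _
    set γ : Measure (EuclideanSpace ℝ (Fin N)) := volume.withDensity D with hγdef
    set C : Set (EuclideanSpace ℝ (Fin N)) :=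
      Subtype.val '' ((homeomorphUnitSphereProd (EuclideanSpace ℝ (Fin N))) ⁻¹'
        (S ×ˢ Set.univ)) with hCdef
    have hCmeas : MeasurableSet C :=
      (MeasurableEmbedding.subtype_coe
        ((measurableSet_singleton (0 : EuclideanSpace ℝ (Fin N))).compl)).measurableSet_image.2
        ((homeomorphUnitSphereProd _).measurable (hSmeas.prod MeasurableSet.univ))
    set gfun : ℝ → ℝ≥0∞ :=
      fun r => ENNReal.ofReal (((Real.sqrt (2*π))⁻¹)^N * Real.exp (-r^2/2)) with hgfundef
    have hgfunmeas : Measurable gfun := by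
      apply ENNReal.measurable_ofReal.comp
      exact (Real.measurable_exp.comp (((measurable_id.pow_const 2)).neg.div_const 2)).const_mul _
    set J : ℝ≥0∞ := ∫⁻ r : Set.Ioi (0:ℝ), gfun r ∂(MeasureTheory.Measure.volumeIoiPow (N - 1))
      with hJdef
    -- pointwise product identity
    have hprod : ∀ (w : Fin N → ℝ) (x : EuclideanSpace ℝ (Fin N)),
        ((Real.sqrt (2*π))⁻¹)^N * Real.exp (-‖x‖^2/2) * Real.exp (∑ k, w k * (x k)^2)
         = ∏ k, ((Real.sqrt (2*π))⁻¹ * Real.exp (-(1/2 - w k) * (x k)^2)) := by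
      intro w x
      rw [Finset.prod_mul_distrib, Finset.prod_const, Finset.card_univ, Fintype.card_fin,
        ← Real.exp_sum, mul_assoc, ← Real.exp_add]
      congr 2
      rw [EuclideanSpace.norm_eq, Real.sq_sqrt (Finset.sum_nonneg fun k _ => sq_nonneg _)]
      rw [show (∑ k, -(1/2 - w k) * (x k)^2) = ∑ k, (w k * (x k)^2 - (x k)^2/2) from
        Finset.sum_congr rfl (fun k _ => by ring), Finset.sum_sub_distrib, ← Finset.sum_div]
      simp only [Real.norm_eq_abs, sq_abs]
      ring
    have hstepA : γ C = (volume : Measure (EuclideanSpace ℝ (Fin N))).toSphere S * J := by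
      rw [hγdef, withDensity_apply _ hCmeas]
      exact polar_lintegral N gfun hgfunmeas S hSmeas
    have hstepB : γ ({(0 : EuclideanSpace ℝ (Fin N))}ᶜ)
        = (volume : Measure (EuclideanSpace ℝ (Fin N))).toSphere Set.univ * J := by
      have h1 : (Subtype.val '' ((homeomorphUnitSphereProd (EuclideanSpace ℝ (Fin N))) ⁻¹'
          ((Set.univ : Set (Metric.sphere (0 : EuclideanSpace ℝ (Fin N)) 1)) ×ˢ Set.univ)))
          = {(0 : EuclideanSpace ℝ (Fin N))}ᶜ := by
        rw [Set.univ_prod_univ, Set.preimage_univ, Subtype.coe_image_univ]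
      rw [hγdef, withDensity_apply _ (measurableSet_singleton _).compl, ← h1]
      exact polar_lintegral N gfun hgfunmeas Set.univ MeasurableSet.univ
    haveI hnt : Nontrivial (EuclideanSpace ℝ (Fin N)) := by
      refine ⟨⟨0, EuclideanSpace.single ⟨0, hN⟩ 1, fun hcontra => ?_⟩⟩
      have := congrArg (fun v : EuclideanSpace ℝ (Fin N) => v ⟨0, hN⟩) hcontra
      simp [EuclideanSpace.single_apply] at this
    have hγuniv : γ Set.univ = 1 := by
      rw [hγdef, withDensity_apply _ MeasurableSet.univ, Measure.restrict_univ]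
      have hDeq : ∀ x : EuclideanSpace ℝ (Fin N),
          D x = ENNReal.ofReal (∏ k, ((Real.sqrt (2*π))⁻¹
            * Real.exp (-(1/2 - (0:ℝ)) * (x k)^2))) := by
        intro x
        have h0 := hprod (fun _ => 0) x
        simp only [zero_mul, Finset.sum_const_zero, Real.exp_zero, mul_one] at h0
        simp only [hDdef]
        rw [h0]
      rw [lintegral_congr hDeq,
        euclid_prod_lintegral N _
          (fun k => (integrable_exp_neg_mul_sq (by norm_num : (0:ℝ) < 1/2 - 0)).const_mul _)
          (fun k x => mul_nonneg (inv_nonneg.2 (Real.sqrt_nonneg _)) (Real.exp_pos _).le)]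
      have hval : (∫ x : ℝ, (Real.sqrt (2*π))⁻¹ * Real.exp (-(1/2 - (0:ℝ)) * x^2)) = 1 := by
        rw [one_dim_gauss (by norm_num : (0:ℝ) < 1/2 - 0)]
        norm_num
      rw [Finset.prod_congr rfl (fun k _ => hval), Finset.prod_const_one, ENNReal.ofReal_one]
    have hγ0 : γ {(0 : EuclideanSpace ℝ (Fin N))} = 0 := by
      rw [hγdef, withDensity_apply _ (measurableSet_singleton _),
        Measure.restrict_eq_zero.2 (measure_singleton _), lintegral_zero_measure]
    set K : ℝ≥0∞ := (volume : Measure (EuclideanSpace ℝ (Fin N))).toSphere Set.univ with hKdef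
    have hKfin : K ≠ ⊤ := measure_ne_top _ _
    have hK0 : K ≠ 0 := by
      rw [hKdef, Measure.toSphere_apply_univ]
      apply mul_ne_zero
      · rw [finrank_euclideanSpace_fin]
        exact Nat.cast_ne_zero.2 hN.ne'
      · exact (measure_ball_pos _ _ one_pos).ne'
    have hKJ : K * J = 1 := by
      rw [← hstepB]
      rw [measure_compl (measurableSet_singleton _) (by rw [hγ0]; exact ENNReal.zero_ne_top),
        hγuniv, hγ0, tsub_zero]
    have hident : sphereUniform N S = γ C := by
      show (K⁻¹ • (volume : Measure (EuclideanSpace ℝ (Fin N))).toSphere) S = γ C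
      rw [Measure.smul_apply, smul_eq_mul, hstepA]
      have h2 : K⁻¹ * (volume : Measure (EuclideanSpace ℝ (Fin N))).toSphere S
          = K⁻¹ * K * ((volume : Measure (EuclideanSpace ℝ (Fin N))).toSphere S * J) := by
        conv_lhs => rw [← mul_one ((volume : Measure (EuclideanSpace ℝ (Fin N))).toSphere S),
          ← hKJ]
        ring
      rw [h2, ENNReal.inv_mul_cancel hK0 hKfin, one_mul]
    -- Markov / Chernoff
    set F : EuclideanSpace ℝ (Fin N) → ℝ≥0∞ :=
      fun x => ENNReal.ofReal (Real.exp (∑ k, (lam * a k) * (x k)^2)) with hFdef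
    have hFmeas : Measurable F := by
      apply ENNReal.measurable_ofReal.comp
      apply Real.measurable_exp.comp
      apply Finset.measurable_sum
      intro k _
      exact (((measurable_pi_apply k).comp (WithLp.measurable_ofLp 2 (Fin N → ℝ))).pow_const 2).const_mul _
    have hmarkov : γ C ≤ ∫⁻ x, F x ∂γ := by
      rw [← lintegral_indicator_one hCmeas]
      apply lintegral_mono
      intro x
      by_cases hxC : x ∈ C
      · rw [Set.indicator_of_mem hxC]
        obtain ⟨y, hy, rfl⟩ := hxC
        have hy1 : c₀ ≤ ∑ k, s k * ((‖(y : EuclideanSpace ℝ (Fin N))‖⁻¹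
            • (y : EuclideanSpace ℝ (Fin N))) k)^2 := by
          have h' := hy.1
          simpa [hSdef] using h'
        have hyne : (y : EuclideanSpace ℝ (Fin N)) ≠ 0 := y.2
        have hn0 : 0 < ‖(y : EuclideanSpace ℝ (Fin N))‖ := norm_pos_iff.2 hyne
        have hsq : ∑ k, ((y : EuclideanSpace ℝ (Fin N)) k)^2
            = ‖(y : EuclideanSpace ℝ (Fin N))‖^2 := by
          rw [EuclideanSpace.norm_eq,
            Real.sq_sqrt (Finset.sum_nonneg fun k _ => sq_nonneg _)]
          simp [Real.norm_eq_abs, sq_abs]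
        have hy2 : c₀ * ‖(y : EuclideanSpace ℝ (Fin N))‖^2
            ≤ ∑ k, s k * ((y : EuclideanSpace ℝ (Fin N)) k)^2 := by
          have heq : ∑ k, s k * ((‖(y : EuclideanSpace ℝ (Fin N))‖⁻¹
              • (y : EuclideanSpace ℝ (Fin N))) k)^2
              = (‖(y : EuclideanSpace ℝ (Fin N))‖^2)⁻¹
                * ∑ k, s k * ((y : EuclideanSpace ℝ (Fin N)) k)^2 := by
            rw [Finset.mul_sum]
            apply Finset.sum_congr rfl
            intro k _
            have : ((‖(y : EuclideanSpace ℝ (Fin N))‖⁻¹ • (y : EuclideanSpace ℝ (Fin N))) k)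
                = ‖(y : EuclideanSpace ℝ (Fin N))‖⁻¹ * (y : EuclideanSpace ℝ (Fin N)) k := rfl
            rw [this]
            rw [mul_pow, inv_pow]
            ring
          rw [heq] at hy1
          have h4 : (0:ℝ) < ‖(y : EuclideanSpace ℝ (Fin N))‖^2 := by positivity
          calc c₀ * ‖(y : EuclideanSpace ℝ (Fin N))‖^2
              ≤ ((‖(y : EuclideanSpace ℝ (Fin N))‖^2)⁻¹
                  * ∑ k, s k * ((y : EuclideanSpace ℝ (Fin N)) k)^2)
                * ‖(y : EuclideanSpace ℝ (Fin N))‖^2 :=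
                mul_le_mul_of_nonneg_right hy1 h4.le
            _ = ∑ k, s k * ((y : EuclideanSpace ℝ (Fin N)) k)^2 := by
                field_simp
        have hexp0 : 0 ≤ ∑ k, (lam * a k) * ((y : EuclideanSpace ℝ (Fin N)) k)^2 := by
          have hsplit : ∑ k, (lam * a k) * ((y : EuclideanSpace ℝ (Fin N)) k)^2
              = lam * ((∑ k, s k * ((y : EuclideanSpace ℝ (Fin N)) k)^2)
                - c₀ * ∑ k, ((y : EuclideanSpace ℝ (Fin N)) k)^2) := by
            rw [mul_sub, Finset.mul_sum, Finset.mul_sum, Finset.mul_sum,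
              ← Finset.sum_sub_distrib]
            apply Finset.sum_congr rfl
            intro k _
            simp only [hadef]
            ring
          rw [hsplit, hsq]
          apply mul_nonneg hlam0.le
          linarith [hy2]
        apply ENNReal.one_le_ofReal.2
        rw [← Real.exp_zero]
        exact Real.exp_le_exp.2 hexp0
      · rw [Set.indicator_of_notMem hxC]
        exact zero_le
    have hmgf : ∫⁻ x, F x ∂γ = ENNReal.ofReal (∏ k, ∫ x : ℝ, q k x) := by
      rw [hγdef, lintegral_withDensity_eq_lintegral_mul _ hDmeas hFmeas]
      have heq : ∀ x : EuclideanSpace ℝ (Fin N),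
          (D * F) x = ENNReal.ofReal (∏ k, q k (x k)) := by
        intro x
        have h0 := hprod (fun k => lam * a k) x
        simp only [Pi.mul_apply, hDdef, hFdef, hqdef]
        rw [← ENNReal.ofReal_mul (by positivity)]
        rw [h0]
      rw [lintegral_congr heq, euclid_prod_lintegral N q hqint hq0]
    have hsum_a : ∑ k, a k = -((N:ℝ) * t) := by
      simp only [hadef]
      rw [Finset.sum_sub_distrib, Finset.sum_const, Finset.card_univ, Fintype.card_fin,
        nsmul_eq_mul, hc₀def]
      have hNne : (N:ℝ) ≠ 0 := ne_of_gt hNR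
      field_simp
      ring
    have hfinal : (∏ k, ∫ x : ℝ, q k x) ≤ Real.exp (-((N:ℝ) * t^2) / (4*B*(B+t))) := by
      have hval : ∀ k, (∫ x : ℝ, q k x) = (Real.sqrt (1 - 2*lam*(a k)))⁻¹ := by
        intro k
        simp only [hqdef]
        rw [one_dim_gauss (hbqpos k)]
        congr 2
        ring
      calc (∏ k, ∫ x : ℝ, q k x)
          = ∏ k, (Real.sqrt (1 - 2*lam*(a k)))⁻¹ :=
            Finset.prod_congr rfl (fun k _ => hval k)
        _ ≤ ∏ k, Real.exp ((2*lam*(a k))/2 + (2*lam*(a k))^2/(4*(1-b))) := by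
            apply Finset.prod_le_prod
            · intro k _
              positivity
            · intro k _
              exact sqrt_inv_le_exp hb0.le hb1 (hxb k)
        _ = Real.exp (∑ k, ((2*lam*(a k))/2 + (2*lam*(a k))^2/(4*(1-b)))) :=
            (Real.exp_sum _ _).symm
        _ ≤ Real.exp (-((N:ℝ) * t^2) / (4*B*(B+t))) := by
            apply Real.exp_le_exp.2
            rw [Finset.sum_add_distrib]
            have e1 : ∑ k, (2*lam*(a k))/2 = lam * ∑ k, a k := by
              rw [Finset.mul_sum]
              apply Finset.sum_congr rfl
              intro k _
              ring
            have e2 : ∑ k, (2*lam*(a k))^2/(4*(1-b)) ≤ (N:ℝ) * (b^2/(4*(1-b))) := by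
              have hterm : ∀ k, (2*lam*(a k))^2/(4*(1-b)) ≤ b^2/(4*(1-b)) := by
                intro k
                have hnum : (2*lam*(a k))^2 ≤ b^2 := by
                  rw [← sq_abs (2*lam*(a k))]
                  exact pow_le_pow_left₀ (abs_nonneg _) (hxb k) 2
                exact (div_le_div_iff_of_pos_right (by linarith : (0:ℝ) < 4*(1-b))).2 hnum
              calc ∑ k, (2*lam*(a k))^2/(4*(1-b)) ≤ ∑ k, b^2/(4*(1-b)) :=
                    Finset.sum_le_sum (fun k _ => hterm k)
                _ = (N:ℝ) * (b^2/(4*(1-b))) := by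
                    rw [Finset.sum_const, Finset.card_univ, Fintype.card_fin, nsmul_eq_mul]
            have e4 : lam * -((N:ℝ)*t) + (N:ℝ) * (b^2/(4*(1-b)))
                = -((N:ℝ) * t^2) / (4*B*(B+t)) := by
              rw [hlamdef, hbdef]
              have h1 : (1:ℝ) - t/(B+t) = B/(B+t) := by field_simp; ring
              rw [h1]
              field_simp
              ring
            rw [e1, hsum_a]
            linarith [e2, e4]
    calc sphereUniform N S = γ C := hident
      _ ≤ ∫⁻ x, F x ∂γ := hmarkov
      _ = ENNReal.ofReal (∏ k, ∫ x : ℝ, q k x) := hmgf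
      _ ≤ ENNReal.ofReal (Real.exp (-((N:ℝ) * t^2) / (4*B*(B+t)))) :=
          ENNReal.ofReal_le_ofReal hfinal
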